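/- For the two-platform social optimum, the system λ₁ = √((1 + λ₂/μ)/(c₁ + 1/(λ₂μ))) and λ₂ = √((1 + λ₁/μ)/(c₂ + 1/(λ₁μ))) has a unique solution with λ₁ > 0 and λ₂ > 0. -/

import Mathlib

noncomputable def fm (c μ x : ℝ) : ℝ := Real.sqrt ((1 + x / μ) / (c + 1 / (x * μ)))

lemma fm_arg_eq (c μ x : ℝ) (hc : 0 < c) (hμ : 0 < μ) (hx : 0 < x) :
    (1 + x / μ) / (c + 1 / (x * μ)) = x * (μ + x) / (c * x * μ + 1) := by
  rw [div_eq_div_iff (by positivity) (by positivity)]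
  field_simp

lemma fm_pos (c μ x : ℝ) (hc : 0 < c) (hμ : 0 < μ) (hx : 0 < x) : 0 < fm c μ x := by
  unfold fm
  rw [fm_arg_eq c μ x hc hμ hx]
  exact Real.sqrt_pos.mpr (by positivity)

lemma fm_eq_iff (c μ x y : ℝ) (hc : 0 < c) (hμ : 0 < μ) (hx : 0 < x) (hy : 0 ≤ y) :
    y = fm c μ x ↔ y ^ 2 * (c * x * μ + 1) = x * μ + x ^ 2 := by
  unfold fm
  rw [fm_arg_eq c μ x hc hμ hx]
  have hd : 0 < c * x * μ + 1 := by positivity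
  have hA : 0 ≤ x * (μ + x) / (c * x * μ + 1) := by positivity
  constructor
  · intro h
    have : y ^ 2 = x * (μ + x) / (c * x * μ + 1) := by rw [h, Real.sq_sqrt hA]
    rw [this]; field_simp
  · intro h
    have hy2 : y ^ 2 = x * (μ + x) / (c * x * μ + 1) := by
      field_simp; linarith [h]
    rw [← hy2, Real.sqrt_sq hy]


lemma mono_aux (c μ a₁ a₂ b₁ b₂ : ℝ) (hc : 0 < c) (hμ : 0 < μ)
    (ha₁ : 0 < a₁) (ha₂ : 0 < a₂) (hb₁ : 0 < b₁) (hb₂ : 0 < b₂)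
    (hA : a₂ ^ 2 * (c * a₁ * μ + 1) = a₁ * μ + a₁ ^ 2)
    (hB : b₂ ^ 2 * (c * b₁ * μ + 1) = b₁ * μ + b₁ ^ 2)
    (hlt : a₁ < b₁) : a₂ < b₂ := by
  have d1 : 0 < c * a₁ * μ + 1 := by positivity
  have d2 : 0 < c * b₁ * μ + 1 := by positivity
  have key : (a₁ * μ + a₁ ^ 2) * (c * b₁ * μ + 1) < (b₁ * μ + b₁ ^ 2) * (c * a₁ * μ + 1) := by
    nlinarith [mul_pos (sub_pos.mpr hlt) (mul_pos (mul_pos (mul_pos hc ha₁) hb₁) hμ),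
      mul_pos (sub_pos.mpr hlt) hμ, mul_pos (sub_pos.mpr hlt) (by linarith : (0:ℝ) < a₁ + b₁)]
  rw [← hA, ← hB] at key
  have key2 : a₂ ^ 2 * ((c * a₁ * μ + 1) * (c * b₁ * μ + 1))
      < b₂ ^ 2 * ((c * a₁ * μ + 1) * (c * b₁ * μ + 1)) := by linear_combination key
  have hsq : a₂ ^ 2 < b₂ ^ 2 := (mul_lt_mul_iff_of_pos_right (mul_pos d1 d2)).mp key2
  nlinarith

lemma ratio_aux (c μ a₁ a₂ b₁ b₂ : ℝ) (hc : 0 < c) (hμ : 0 < μ)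
    (ha₁ : 0 < a₁) (ha₂ : 0 < a₂) (hb₁ : 0 < b₁) (hb₂ : 0 < b₂)
    (hA : a₁ ^ 2 * (c * a₂ * μ + 1) = a₂ * μ + a₂ ^ 2)
    (hB : b₁ ^ 2 * (c * b₂ * μ + 1) = b₂ * μ + b₂ ^ 2)
    (hlt : a₂ < b₂) : b₁ ^ 2 * a₂ ^ 2 < a₁ ^ 2 * b₂ ^ 2 := by
  have d1 : 0 < c * a₂ * μ + 1 := by positivity
  have d2 : 0 < c * b₂ * μ + 1 := by positivity
  have hab : 0 < a₂ * b₂ := mul_pos ha₂ hb₂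
  have key : (b₂ * μ + b₂ ^ 2) * a₂ ^ 2 * (c * a₂ * μ + 1)
      < (a₂ * μ + a₂ ^ 2) * b₂ ^ 2 * (c * b₂ * μ + 1) := by
    nlinarith [mul_pos (sub_pos.mpr hlt) (mul_pos hab hμ),
      mul_pos (mul_pos (sub_pos.mpr hlt) (by linarith : (0:ℝ) < a₂ + b₂))
        (mul_pos (mul_pos hc hab) (mul_pos hμ hμ)),
      mul_pos (sub_pos.mpr hlt) (mul_pos (mul_pos hc (mul_pos hab hab)) hμ)]
  rw [← hA, ← hB] at key
  have key2 : b₁ ^ 2 * a₂ ^ 2 * ((c * a₂ * μ + 1) * (c * b₂ * μ + 1))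
      < a₁ ^ 2 * b₂ ^ 2 * ((c * a₂ * μ + 1) * (c * b₂ * μ + 1)) := by linear_combination key
  exact (mul_lt_mul_iff_of_pos_right (mul_pos d1 d2)).mp key2

lemma not_lt_aux (c₁ c₂ μ a₁ a₂ b₁ b₂ : ℝ) (hc₁ : 0 < c₁) (hc₂ : 0 < c₂) (hμ : 0 < μ)
    (ha₁ : 0 < a₁) (ha₂ : 0 < a₂) (hb₁ : 0 < b₁) (hb₂ : 0 < b₂)
    (hA1 : a₁ ^ 2 * (c₁ * a₂ * μ + 1) = a₂ * μ + a₂ ^ 2)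
    (hA2 : a₂ ^ 2 * (c₂ * a₁ * μ + 1) = a₁ * μ + a₁ ^ 2)
    (hB1 : b₁ ^ 2 * (c₁ * b₂ * μ + 1) = b₂ * μ + b₂ ^ 2)
    (hB2 : b₂ ^ 2 * (c₂ * b₁ * μ + 1) = b₁ * μ + b₁ ^ 2)
    (hlt : a₁ < b₁) : False := by
  have h2 : a₂ < b₂ := mono_aux c₂ μ a₁ a₂ b₁ b₂ hc₂ hμ ha₁ ha₂ hb₁ hb₂ hA2 hB2 hlt
  have r1 : b₁ ^ 2 * a₂ ^ 2 < a₁ ^ 2 * b₂ ^ 2 :=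
    ratio_aux c₁ μ a₁ a₂ b₁ b₂ hc₁ hμ ha₁ ha₂ hb₁ hb₂ hA1 hB1 h2
  have r2 : b₂ ^ 2 * a₁ ^ 2 < a₂ ^ 2 * b₁ ^ 2 :=
    ratio_aux c₂ μ a₂ a₁ b₂ b₁ hc₂ hμ ha₂ ha₁ hb₂ hb₁ hA2 hB2 hlt
  nlinarith

lemma uniq_aux (c₁ c₂ μ a₁ a₂ b₁ b₂ : ℝ) (hc₁ : 0 < c₁) (hc₂ : 0 < c₂) (hμ : 0 < μ)
    (ha₁ : 0 < a₁) (ha₂ : 0 < a₂) (hb₁ : 0 < b₁) (hb₂ : 0 < b₂)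
    (hA1 : a₁ ^ 2 * (c₁ * a₂ * μ + 1) = a₂ * μ + a₂ ^ 2)
    (hA2 : a₂ ^ 2 * (c₂ * a₁ * μ + 1) = a₁ * μ + a₁ ^ 2)
    (hB1 : b₁ ^ 2 * (c₁ * b₂ * μ + 1) = b₂ * μ + b₂ ^ 2)
    (hB2 : b₂ ^ 2 * (c₂ * b₁ * μ + 1) = b₁ * μ + b₁ ^ 2) :
    a₁ = b₁ ∧ a₂ = b₂ := by
  rcases lt_trichotomy a₁ b₁ with h | h | h
  · exact absurd h (fun h => not_lt_aux c₁ c₂ μ a₁ a₂ b₁ b₂ hc₁ hc₂ hμ ha₁ ha₂ hb₁ hb₂ hA1 hA2 hB1 hB2 h)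
  · refine ⟨h, ?_⟩
    subst h
    have d : 0 < c₂ * a₁ * μ + 1 := by positivity
    have : a₂ ^ 2 = b₂ ^ 2 := by
      have := hA2.trans hB2.symm
      exact mul_right_cancel₀ (ne_of_gt d) this
    nlinarith
  · exact absurd h (fun h => not_lt_aux c₂ c₁ μ b₂ b₁ a₂ a₁ hc₂ hc₁ hμ hb₂ hb₁ ha₂ ha₁ hB2 hB1 hA2 hA1
      (by nlinarith [mono_aux c₂ μ b₁ b₂ a₁ a₂ hc₂ hμ hb₁ hb₂ ha₁ ha₂ hB2 hA2 h]))


lemma fm_contAt (c μ x : ℝ) (hc : 0 < c) (hμ : 0 < μ) (hx : 0 < x) :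
    ContinuousAt (fm c μ) x := by
  unfold fm
  apply Real.continuous_sqrt.continuousAt.comp
  apply ContinuousAt.div
  · fun_prop
  · exact continuousAt_const.add (continuousAt_const.div (by fun_prop) (by positivity))
  · positivity

lemma h_ge (c₁ c₂ μ x : ℝ) (hc₁ : 0 < c₁) (hc₂ : 0 < c₂) (hμ : 0 < μ) (hx : 0 < x)
    (h1 : x ^ 2 * c₁ ≤ 1) (h2 : x ^ 2 * c₂ ≤ 1) : x ≤ fm c₁ μ (fm c₂ μ x) := by
  set y := fm c₂ μ x with hy_def
  have hy : 0 < y := fm_pos c₂ μ x hc₂ hμ hx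
  have hy2 : y ^ 2 * (c₂ * x * μ + 1) = x * μ + x ^ 2 :=
    (fm_eq_iff c₂ μ x y hc₂ hμ hx hy.le).mp hy_def
  set z := fm c₁ μ y with hz_def
  have hz : 0 < z := fm_pos c₁ μ y hc₁ hμ hy
  have hz2 : z ^ 2 * (c₁ * y * μ + 1) = y * μ + y ^ 2 :=
    (fm_eq_iff c₁ μ y z hc₁ hμ hy hz.le).mp hz_def
  -- x² ≤ y²
  have hxy : x ^ 2 ≤ y ^ 2 := by
    have d : 0 < c₂ * x * μ + 1 := by positivity
    nlinarith [mul_pos hx hμ]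
  have hxz : x ^ 2 ≤ z ^ 2 := by
    have d : 0 < c₁ * y * μ + 1 := by positivity
    nlinarith [mul_pos hy hμ]
  nlinarith

lemma h_le (c₁ c₂ μ x : ℝ) (hc₁ : 0 < c₁) (hc₂ : 0 < c₂) (hμ : 0 < μ) (hx : 0 < x)
    (h1 : 1 ≤ x ^ 2 * c₁) (h2 : 1 ≤ x ^ 2 * c₂) : fm c₁ μ (fm c₂ μ x) ≤ x := by
  set y := fm c₂ μ x with hy_def
  have hy : 0 < y := fm_pos c₂ μ x hc₂ hμ hx
  have hy2 : y ^ 2 * (c₂ * x * μ + 1) = x * μ + x ^ 2 :=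
    (fm_eq_iff c₂ μ x y hc₂ hμ hx hy.le).mp hy_def
  set z := fm c₁ μ y with hz_def
  have hz : 0 < z := fm_pos c₁ μ y hc₁ hμ hy
  have hz2 : z ^ 2 * (c₁ * y * μ + 1) = y * μ + y ^ 2 :=
    (fm_eq_iff c₁ μ y z hc₁ hμ hy hz.le).mp hz_def
  have hxy : y ^ 2 ≤ x ^ 2 := by
    have d : 0 < c₂ * x * μ + 1 := by positivity
    nlinarith [mul_pos hx hμ]
  have hxz : z ^ 2 ≤ x ^ 2 := by
    have d : 0 < c₁ * y * μ + 1 := by positivity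
    nlinarith [mul_pos hy hμ]
  nlinarith

lemma exists_fixed (c₁ c₂ μ : ℝ) (hc₁ : 0 < c₁) (hc₂ : 0 < c₂) (hμ : 0 < μ) :
    ∃ x : ℝ, 0 < x ∧ fm c₁ μ (fm c₂ μ x) = x := by
  set a : ℝ := min (Real.sqrt (1 / c₁)) (Real.sqrt (1 / c₂)) with ha_def
  set b : ℝ := max (Real.sqrt (1 / c₁)) (Real.sqrt (1 / c₂)) with hb_def
  have hs₁ : (0:ℝ) < Real.sqrt (1 / c₁) := Real.sqrt_pos.mpr (by positivity)
  have hs₂ : (0:ℝ) < Real.sqrt (1 / c₂) := Real.sqrt_pos.mpr (by positivity)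
  have ha : 0 < a := lt_min hs₁ hs₂
  have hb : 0 < b := lt_of_lt_of_le ha (min_le_max)
  have hab : a ≤ b := min_le_max
  have hsq₁ : Real.sqrt (1 / c₁) ^ 2 = 1 / c₁ := Real.sq_sqrt (by positivity)
  have hsq₂ : Real.sqrt (1 / c₂) ^ 2 = 1 / c₂ := Real.sq_sqrt (by positivity)
  have haux : ∀ u : ℝ, 0 ≤ u → u ≤ Real.sqrt (1 / c₁) → u ^ 2 * c₁ ≤ 1 := by
    intro u hu hle
    have h : u ^ 2 ≤ 1 / c₁ := by rw [← hsq₁]; exact pow_le_pow_left₀ hu hle 2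
    have := mul_le_mul_of_nonneg_right h hc₁.le
    rwa [one_div, inv_mul_cancel₀ hc₁.ne'] at this
  have haux' : ∀ u : ℝ, 0 ≤ u → u ≤ Real.sqrt (1 / c₂) → u ^ 2 * c₂ ≤ 1 := by
    intro u hu hle
    have h : u ^ 2 ≤ 1 / c₂ := by rw [← hsq₂]; exact pow_le_pow_left₀ hu hle 2
    have := mul_le_mul_of_nonneg_right h hc₂.le
    rwa [one_div, inv_mul_cancel₀ hc₂.ne'] at this
  have hbux : ∀ u : ℝ, Real.sqrt (1 / c₁) ≤ u → 1 ≤ u ^ 2 * c₁ := by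
    intro u hle
    have h : 1 / c₁ ≤ u ^ 2 := by rw [← hsq₁]; exact pow_le_pow_left₀ hs₁.le hle 2
    have := mul_le_mul_of_nonneg_right h hc₁.le
    rwa [one_div, inv_mul_cancel₀ hc₁.ne'] at this
  have hbux' : ∀ u : ℝ, Real.sqrt (1 / c₂) ≤ u → 1 ≤ u ^ 2 * c₂ := by
    intro u hle
    have h : 1 / c₂ ≤ u ^ 2 := by rw [← hsq₂]; exact pow_le_pow_left₀ hs₂.le hle 2
    have := mul_le_mul_of_nonneg_right h hc₂.le
    rwa [one_div, inv_mul_cancel₀ hc₂.ne'] at this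
  -- the composed map and IVT
  set G : ℝ → ℝ := fun x => fm c₁ μ (fm c₂ μ x) - x with hG_def
  have hcont : ContinuousOn G (Set.Icc a b) := by
    intro x hx
    have hx0 : 0 < x := lt_of_lt_of_le ha hx.1
    have : ContinuousAt G x := by
      apply ContinuousAt.sub _ continuousAt_id
      exact (fm_contAt c₁ μ (fm c₂ μ x) hc₁ hμ (fm_pos c₂ μ x hc₂ hμ hx0)).comp
        (fm_contAt c₂ μ x hc₂ hμ hx0)
    exact this.continuousWithinAt
  have hGa : 0 ≤ G a := by
    have := h_ge c₁ c₂ μ a hc₁ hc₂ hμ ha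
      (haux a ha.le (min_le_left _ _)) (haux' a ha.le (min_le_right _ _))
    simpa [hG_def] using sub_nonneg.mpr this
  have hGb : G b ≤ 0 := by
    have := h_le c₁ c₂ μ b hc₁ hc₂ hμ hb
      (hbux b (le_max_left _ _)) (hbux' b (le_max_right _ _))
    simpa [hG_def] using sub_nonpos.mpr this
  have h0 : (0:ℝ) ∈ Set.Icc (G b) (G a) := ⟨hGb, hGa⟩
  obtain ⟨x, hx, hGx⟩ := intermediate_value_Icc' hab hcont h0
  exact ⟨x, lt_of_lt_of_le ha hx.1, by simpa [hG_def, sub_eq_zero] using hGx⟩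


theorem stmt_6 (c₁ c₂ μ : ℝ) (hc₁ : 0 < c₁) (hc₂ : 0 < c₂) (hμ : 0 < μ) :
    ∃! lam : ℝ × ℝ, 0 < lam.1 ∧ 0 < lam.2 ∧
      lam.1 = Real.sqrt ((1 + lam.2 / μ) / (c₁ + 1 / (lam.2 * μ))) ∧
      lam.2 = Real.sqrt ((1 + lam.1 / μ) / (c₂ + 1 / (lam.1 * μ))) := by
  obtain ⟨x, hx, hfix⟩ := exists_fixed c₁ c₂ μ hc₁ hc₂ hμ
  set y := fm c₂ μ x with hy_def
  have hy : 0 < y := fm_pos c₂ μ x hc₂ hμ hx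
  have e1 : x = fm c₁ μ y := hfix.symm
  have hX1 : x ^ 2 * (c₁ * y * μ + 1) = y * μ + y ^ 2 :=
    (fm_eq_iff c₁ μ y x hc₁ hμ hy hx.le).mp e1
  have hX2 : y ^ 2 * (c₂ * x * μ + 1) = x * μ + x ^ 2 :=
    (fm_eq_iff c₂ μ x y hc₂ hμ hx hy.le).mp hy_def
  refine ⟨(x, y), ⟨hx, hy, e1, hy_def⟩, ?_⟩
  rintro ⟨p, q⟩ ⟨hp, hq, h3, h4⟩
  have h3' : p = fm c₁ μ q := h3
  have h4' : q = fm c₂ μ p := h4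
  have hP1 : p ^ 2 * (c₁ * q * μ + 1) = q * μ + q ^ 2 :=
    (fm_eq_iff c₁ μ q p hc₁ hμ hq hp.le).mp h3'
  have hP2 : q ^ 2 * (c₂ * p * μ + 1) = p * μ + p ^ 2 :=
    (fm_eq_iff c₂ μ p q hc₂ hμ hp hq.le).mp h4'
  obtain ⟨h1, h2⟩ := uniq_aux c₁ c₂ μ p q x y hc₁ hc₂ hμ hp hq hx hy hP1 hP2 hX1 hX2
  simp [Prod.ext_iff, h1, h2]
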